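/- (Hessian of the spatial Godunov–Boillat potential at an equilibrium state.) Let Ῡ = (ψ̃₀, 0, θ̃₀, 0, 0, 0) be a state with ũ = 0, Σ̃ = 0, σ̃ = 0, q̃ = 0 and θ̃₀ < 0, and write θ = −1/θ̃₀, and evaluate p̂ and its derivatives at (θ, ψ̃₀). Then the second partial derivatives of X¹ at Ῡ are: ∂²X¹/∂ψ̃∂ũ_k = p̂_ψ δ_{1k}; ∂²X¹/∂θ̃∂ũ_k = θ²p̂_θ δ_{1k}; ∂²X¹/∂ũ_m∂Σ̃_{kl} = θ δ_{k1} δ_{lm}; ∂²X¹/∂σ̃∂ũ_k = θ δ_{1k}; ∂²X¹/∂θ̃∂q̃_k = θ² δ_{1k}; and all remaining second partial derivatives of X¹ vanish at Ῡ (in particular ∂²X¹/∂ψ̃², ∂²X¹/∂ψ̃∂θ̃, ∂²X¹/∂θ̃², ∂²X¹/∂ũ_j∂ũ_k, and all second derivatives purely within or between the blocks Σ̃, σ̃, q̃, as well as those between ψ̃ and the blocks Σ̃, σ̃, q̃). -/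

import Mathlib

noncomputable section

/-- The extended thermodynamical potential
`ψ(Υ) = ψ̃ + ½θ|ũ|² + ½τ₁‖Σ̃‖² + ½τ₂σ̃² + ½τ₀|q̃|²` with `θ = -1/θ̃`. -/
def psiVal (τ0 τ1 τ2 : ℝ) (ψt : ℝ) (ut : Fin 3 → ℝ) (θt : ℝ)
    (St : Matrix (Fin 3) (Fin 3) ℝ) (σt : ℝ) (qt : Fin 3 → ℝ) : ℝ :=
  ψt + (1/2) * (-1/θt) * (∑ i, (ut i)^2) + (1/2) * τ1 * (∑ j, ∑ k, (St j k)^2)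
    + (1/2) * τ2 * σt^2 + (1/2) * τ0 * (∑ i, (qt i)^2)

/-- The temporal Godunov–Boillat potential `X⁰(Υ) = p̂(θ, ψ(Υ))/θ`, `θ = -1/θ̃`. -/
def X0 (phat : ℝ × ℝ → ℝ) (τ0 τ1 τ2 : ℝ) (ψt : ℝ) (ut : Fin 3 → ℝ) (θt : ℝ)
    (St : Matrix (Fin 3) (Fin 3) ℝ) (σt : ℝ) (qt : Fin 3 → ℝ) : ℝ :=
  phat (-1/θt, psiVal τ0 τ1 τ2 ψt ut θt St σt qt) / (-1/θt)

/-- The spatial Godunov–Boillat potential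
`X¹(Υ) = p̂(θ, ψ(Υ)) ũ₁ + θ((Σ̃ũ)₁ + σ̃ũ₁ + q̃₁)`, `θ = -1/θ̃`. -/
def X1 (phat : ℝ × ℝ → ℝ) (τ0 τ1 τ2 : ℝ) (ψt : ℝ) (ut : Fin 3 → ℝ) (θt : ℝ)
    (St : Matrix (Fin 3) (Fin 3) ℝ) (σt : ℝ) (qt : Fin 3 → ℝ) : ℝ :=
  phat (-1/θt, psiVal τ0 τ1 τ2 ψt ut θt St σt qt) * ut 0
    + (-1/θt) * ((∑ j, St 0 j * ut j) + σt * ut 0 + qt 0)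

/-- Partial derivative `p̂_ψ` of `p̂` with respect to its second slot. -/
def pPsi (phat : ℝ × ℝ → ℝ) (a b : ℝ) : ℝ := deriv (fun s => phat (a, s)) b

/-- Partial derivative `p̂_θ` of `p̂` with respect to its first slot. -/
def pTheta (phat : ℝ × ℝ → ℝ) (a b : ℝ) : ℝ := deriv (fun t => phat (t, b)) a

section Helpers

lemma zsq : (0:ℝ)^2 = 0 := by norm_num

lemma sumsq_single (k : Fin 3) (t : ℝ) : ∑ i : Fin 3, (Pi.single k t i)^2 = t^2 := by
  simp [Pi.single_apply, apply_ite (·^2)]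

lemma single0 (k : Fin 3) (t : ℝ) :
    (Pi.single k t : Fin 3 → ℝ) 0 = (if (0:Fin 3) = k then 1 else 0) * t := by
  rw [Pi.single_apply]; split <;> simp

lemma sum_std (k l m : Fin 3) (t s : ℝ) :
    ∑ j : Fin 3, Matrix.single k l t 0 j * (Pi.single m s : Fin 3 → ℝ) j
      = (if k = 0 then 1 else 0) * (if l = m then 1 else 0) * (t * s) := by
  simp [Matrix.single, Pi.single_apply, ite_and, Finset.sum_ite_eq]
  split <;> split <;> simp

lemma sumsq_std (k l : Fin 3) (t : ℝ) :
    ∑ j : Fin 3, ∑ i : Fin 3, (Matrix.single k l t j i)^2 = t^2 := by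
  fin_cases k <;> fin_cases l <;>
    simp [Fin.sum_univ_three, Matrix.single]

lemma sumsq_pair (j k : Fin 3) (s t : ℝ) :
    ∑ i : Fin 3, ((Pi.single j s : Fin 3 → ℝ) i + (Pi.single k t : Fin 3 → ℝ) i)^2
      = s^2 + t^2 + 2*s*t*(if j = k then 1 else 0) := by
  fin_cases j <;> fin_cases k <;>
    simp [Fin.sum_univ_three, Pi.single_apply] <;> ring

variable (phat : ℝ × ℝ → ℝ)

lemma curveD (hp : Differentiable ℝ phat) (f g : ℝ → ℝ) (vf vg x : ℝ)
    (hf : HasDerivAt f vf x) (hg : HasDerivAt g vg x) :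
    HasDerivAt (fun t => phat (f t, g t)) (fderiv ℝ phat (f x, g x) (vf, vg)) x :=
  (hp (f x, g x)).hasFDerivAt.comp_hasDerivAt x (hf.prodMk hg)

lemma pPsi_eq (hp : Differentiable ℝ phat) (a b : ℝ) :
    pPsi phat a b = fderiv ℝ phat (a, b) (0, 1) :=
  (curveD phat hp (fun _ => a) id 0 1 b (hasDerivAt_const b a) (hasDerivAt_id b)).deriv

lemma pTheta_eq (hp : Differentiable ℝ phat) (a b : ℝ) :
    pTheta phat a b = fderiv ℝ phat (a, b) (1, 0) :=
  (curveD phat hp id (fun _ => b) 1 0 a (hasDerivAt_id a) (hasDerivAt_const a b)).deriv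

lemma lemLin (a b x : ℝ) : deriv (fun t : ℝ => a + b * t) x = b := by
  simpa using ((((hasDerivAt_id x).const_mul b).const_add a)).deriv

lemma lemI (hp : Differentiable ℝ phat) (c d m e a b B : ℝ) :
    deriv (fun t : ℝ => phat (c, d + m * t + e * t ^ 2) * (a + b * t) + B * t) 0
      = (fderiv ℝ phat (c, d)) (0, 1) * m * a + phat (c, d) * b + B := by
  have hg : HasDerivAt (fun t : ℝ => d + m * t + e * t ^ 2) (m * 1 + e * (2 * (0:ℝ)^1)) 0 :=
    (((hasDerivAt_id (0:ℝ)).const_mul m).const_add d).add ((hasDerivAt_pow 2 (0:ℝ)).const_mul e)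
  have h1 := curveD phat hp (fun _ => c) _ 0 _ 0 (hasDerivAt_const 0 c) hg
  have h2 := (h1.mul (((hasDerivAt_id (0:ℝ)).const_mul b).const_add a)).add
      ((hasDerivAt_id (0:ℝ)).const_mul B)
  have h3 : deriv (fun t : ℝ => phat (c, d + m * t + e * t ^ 2) * (a + b * t) + B * t) 0 = _ :=
    h2.deriv
  norm_num at h3
  rw [h3, show ((0:ℝ), m) = m • ((0:ℝ), (1:ℝ)) by simp, map_smul, smul_eq_mul]
  ring

lemma lemD' (hp : Differentiable ℝ phat) (c d e : ℝ) :
    HasDerivAt (fun s : ℝ => phat (c, d + e * s ^ 2)) 0 0 := by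
  have hg : HasDerivAt (fun s : ℝ => d + e * s ^ 2) (e * (2 * (0:ℝ)^1)) 0 :=
    ((hasDerivAt_pow 2 (0:ℝ)).const_mul e).const_add d
  have h1 := curveD phat hp (fun _ => c) _ 0 _ 0 (hasDerivAt_const 0 c) hg
  simpa [show ((0:ℝ), (0:ℝ)) = 0 from rfl] using h1

lemma lemO (hp : ContDiff ℝ 2 phat) (c d e K b : ℝ) :
    deriv (fun s : ℝ => K * (s ^ 2 * (fderiv ℝ phat (c, d + e * s ^ 2)) (0, 1))
        + phat (c, d + e * s ^ 2) * b) 0 = 0 := by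
  have hd : Differentiable ℝ phat := hp.differentiable (by norm_num)
  have h1 : ContDiff ℝ 1 (fderiv ℝ phat) := hp.fderiv_right (by norm_num)
  have hγ : Differentiable ℝ (fun s : ℝ => ((c, d + e * s ^ 2) : ℝ × ℝ)) :=
    Differentiable.prodMk (differentiable_const c)
      ((differentiable_const d).add ((differentiable_pow 2).const_mul e))
  have hP : DifferentiableAt ℝ (fun s : ℝ => (fderiv ℝ phat (c, d + e * s ^ 2)) (0, 1)) 0 :=
    DifferentiableAt.clm_apply ((h1.differentiable one_ne_zero).comp hγ).differentiableAt
      (differentiableAt_const _)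
  have h2 : HasDerivAt (fun s : ℝ => s ^ 2 *
      (fun s : ℝ => (fderiv ℝ phat (c, d + e * s ^ 2)) (0, 1)) s)
      ((2 * (0:ℝ)^1) * (fderiv ℝ phat (c, d + e * 0 ^ 2)) (0, 1) + (0:ℝ)^2 *
        deriv (fun s : ℝ => (fderiv ℝ phat (c, d + e * s ^ 2)) (0, 1)) 0) 0 :=
    (hasDerivAt_pow 2 (0:ℝ)).mul hP.hasDerivAt
  have h3 : deriv (fun s : ℝ => K * (s ^ 2 * (fderiv ℝ phat (c, d + e * s ^ 2)) (0, 1))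
      + phat (c, d + e * s ^ 2) * b) 0 = _ :=
    ((h2.const_mul K).add ((lemD' phat hd c d e).mul_const b)).deriv
  simpa using h3

lemma lemInv (θ0 : ℝ) (hθ0 : θ0 < 0) : HasDerivAt (fun s : ℝ => -1/s) (1/θ0^2) θ0 := by
  have h := (hasDerivAt_inv (ne_of_lt hθ0)).neg
  have he : (-fun s : ℝ => s⁻¹) = fun s : ℝ => -1/s := by funext s; simp only [Pi.neg_apply]; ring
  rw [he] at h
  rw [neg_neg, ← one_div] at h
  exact h

end Helpers

/-- Hessian of the spatial Godunov–Boillat potential `X¹` at an equilibrium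
state `Ῡ = (ψ̃₀, 0, θ̃₀, 0, 0, 0)` with `θ̃₀ < 0`, `θ = -1/θ̃₀`:
`∂²X¹/∂ψ̃∂ũ_k = p̂_ψ δ_{1k}`, `∂²X¹/∂θ̃∂ũ_k = θ²p̂_θ δ_{1k}`,
`∂²X¹/∂ũ_m∂Σ̃_{kl} = θ δ_{k1} δ_{lm}`, `∂²X¹/∂σ̃∂ũ_k = θ δ_{1k}`,
`∂²X¹/∂θ̃∂q̃_k = θ² δ_{1k}`, and all remaining second partial derivatives of
`X¹` vanish at `Ῡ`. -/
theorem X1_hessian_at_equilibrium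
    (phat : ℝ × ℝ → ℝ) (hp : ContDiff ℝ 2 phat)
    (τ0 τ1 τ2 : ℝ) (hτ0 : 0 < τ0) (hτ1 : 0 < τ1) (hτ2 : 0 < τ2)
    (ψ0 θ0 : ℝ) (hθ0 : θ0 < 0) :
    -- ∂²X¹/∂ψ̃∂ũ_k = p̂_ψ δ_{1k}
    (∀ k : Fin 3,
      deriv (fun s : ℝ => deriv (fun t : ℝ => X1 phat τ0 τ1 τ2 s
          (Pi.single k t) θ0 0 0 0) 0) ψ0
        = pPsi phat (-1/θ0) ψ0 * (if (0 : Fin 3) = k then 1 else 0))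
    -- ∂²X¹/∂θ̃∂ũ_k = θ² p̂_θ δ_{1k}
    ∧ (∀ k : Fin 3,
      deriv (fun s : ℝ => deriv (fun t : ℝ => X1 phat τ0 τ1 τ2 ψ0
          (Pi.single k t) s 0 0 0) 0) θ0
        = (-1/θ0)^2 * pTheta phat (-1/θ0) ψ0 * (if (0 : Fin 3) = k then 1 else 0))
    -- ∂²X¹/∂ũ_m∂Σ̃_{kl} = θ δ_{k1} δ_{lm}
    ∧ (∀ m k l : Fin 3,
      deriv (fun s : ℝ => deriv (fun t : ℝ => X1 phat τ0 τ1 τ2 ψ0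
          (Pi.single m s) θ0 (Matrix.single k l t) 0 0) 0) 0
        = (-1/θ0) * (if k = (0 : Fin 3) then 1 else 0) * (if l = m then 1 else 0))
    -- ∂²X¹/∂σ̃∂ũ_k = θ δ_{1k}
    ∧ (∀ k : Fin 3,
      deriv (fun s : ℝ => deriv (fun t : ℝ => X1 phat τ0 τ1 τ2 ψ0
          (Pi.single k t) θ0 0 s 0) 0) 0
        = (-1/θ0) * (if (0 : Fin 3) = k then 1 else 0))
    -- ∂²X¹/∂θ̃∂q̃_k = θ² δ_{1k}
    ∧ (∀ k : Fin 3,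
      deriv (fun s : ℝ => deriv (fun t : ℝ => X1 phat τ0 τ1 τ2 ψ0 0 s 0 0
          (Pi.single k t)) 0) θ0
        = (-1/θ0)^2 * (if (0 : Fin 3) = k then 1 else 0))
    -- ∂²X¹/∂ψ̃² = 0
    ∧ deriv (fun s : ℝ => deriv (fun t : ℝ => X1 phat τ0 τ1 τ2 t 0 θ0 0 0 0) s) ψ0 = 0
    -- ∂²X¹/∂ψ̃∂θ̃ = 0
    ∧ deriv (fun s : ℝ => deriv (fun t : ℝ => X1 phat τ0 τ1 τ2 t 0 s 0 0 0) ψ0) θ0 = 0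
    -- ∂²X¹/∂θ̃² = 0
    ∧ deriv (fun s : ℝ => deriv (fun t : ℝ => X1 phat τ0 τ1 τ2 ψ0 0 t 0 0 0) s) θ0 = 0
    -- ∂²X¹/∂ũ_j∂ũ_k = 0
    ∧ (∀ j k : Fin 3,
      deriv (fun s : ℝ => deriv (fun t : ℝ => X1 phat τ0 τ1 τ2 ψ0
          (Pi.single j s + Pi.single k t) θ0 0 0 0) 0) 0 = 0)
    -- ∂²X¹/∂Σ̃_{jk}∂Σ̃_{lm} = 0
    ∧ (∀ j k l m : Fin 3,
      deriv (fun s : ℝ => deriv (fun t : ℝ => X1 phat τ0 τ1 τ2 ψ0 0 θ0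
          (Matrix.single j k s + Matrix.single l m t) 0 0) 0) 0 = 0)
    -- ∂²X¹/∂σ̃² = 0
    ∧ deriv (fun s : ℝ => deriv (fun t : ℝ => X1 phat τ0 τ1 τ2 ψ0 0 θ0 0 t 0) s) 0 = 0
    -- ∂²X¹/∂q̃_j∂q̃_k = 0
    ∧ (∀ j k : Fin 3,
      deriv (fun s : ℝ => deriv (fun t : ℝ => X1 phat τ0 τ1 τ2 ψ0 0 θ0 0 0
          (Pi.single j s + Pi.single k t)) 0) 0 = 0)
    -- mixed Σ̃–σ̃ = 0
    ∧ (∀ k l : Fin 3,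
      deriv (fun s : ℝ => deriv (fun t : ℝ => X1 phat τ0 τ1 τ2 ψ0 0 θ0
          (Matrix.single k l s) t 0) 0) 0 = 0)
    -- mixed Σ̃–q̃ = 0
    ∧ (∀ k l m : Fin 3,
      deriv (fun s : ℝ => deriv (fun t : ℝ => X1 phat τ0 τ1 τ2 ψ0 0 θ0
          (Matrix.single k l s) 0 (Pi.single m t)) 0) 0 = 0)
    -- mixed σ̃–q̃ = 0
    ∧ (∀ k : Fin 3,
      deriv (fun s : ℝ => deriv (fun t : ℝ => X1 phat τ0 τ1 τ2 ψ0 0 θ0 0 s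
          (Pi.single k t)) 0) 0 = 0)
    -- mixed ψ̃–Σ̃ = 0
    ∧ (∀ k l : Fin 3,
      deriv (fun s : ℝ => deriv (fun t : ℝ => X1 phat τ0 τ1 τ2 s 0 θ0
          (Matrix.single k l t) 0 0) 0) ψ0 = 0)
    -- mixed ψ̃–σ̃ = 0
    ∧ deriv (fun s : ℝ => deriv (fun t : ℝ => X1 phat τ0 τ1 τ2 s 0 θ0 0 t 0) 0) ψ0 = 0
    -- mixed ψ̃–q̃ = 0
    ∧ (∀ k : Fin 3,
      deriv (fun s : ℝ => deriv (fun t : ℝ => X1 phat τ0 τ1 τ2 s 0 θ0 0 0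
          (Pi.single k t)) 0) ψ0 = 0)
    -- mixed θ̃–Σ̃ = 0
    ∧ (∀ k l : Fin 3,
      deriv (fun s : ℝ => deriv (fun t : ℝ => X1 phat τ0 τ1 τ2 ψ0 0 s
          (Matrix.single k l t) 0 0) 0) θ0 = 0)
    -- mixed θ̃–σ̃ = 0
    ∧ deriv (fun s : ℝ => deriv (fun t : ℝ => X1 phat τ0 τ1 τ2 ψ0 0 s 0 t 0) 0) θ0 = 0
    -- mixed ũ–q̃ = 0
    ∧ (∀ j k : Fin 3,
      deriv (fun s : ℝ => deriv (fun t : ℝ => X1 phat τ0 τ1 τ2 ψ0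
          (Pi.single j s) θ0 0 0 (Pi.single k t)) 0) 0 = 0) := by
  have hd : Differentiable ℝ phat := hp.differentiable (by norm_num)
  refine ⟨?_, ?_, ?_, ?_, ?_, ?_, ?_, ?_, ?_, ?_, ?_, ?_, ?_, ?_, ?_, ?_, ?_, ?_, ?_, ?_, ?_⟩
  -- 1: ψ–u
  · intro k
    have hX : ∀ s t : ℝ, X1 phat τ0 τ1 τ2 s (Pi.single k t) θ0 0 0 0
        = phat (-1/θ0, s + 0 * t + ((1/2) * (-1/θ0)) * t ^ 2)
            * (0 + (if (0:Fin 3) = k then 1 else 0) * t) + 0 * t := by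
      intro s t
      simp only [X1, psiVal, Pi.add_apply, single0, sumsq_single, sumsq_pair, sumsq_std, sum_std, Matrix.zero_apply, Pi.zero_apply, mul_zero, zero_mul, add_zero, zero_add, Finset.sum_const_zero, zsq]
      try ring_nf
    have hF : (fun s : ℝ => deriv (fun t : ℝ => X1 phat τ0 τ1 τ2 s (Pi.single k t) θ0 0 0 0) 0)
        = fun s => phat (-1/θ0, s) * (if (0:Fin 3) = k then 1 else 0) := by
      funext s
      simp only [hX]
      rw [lemI phat hd]
      ring
    rw [hF]
    have h1 : HasDerivAt (fun s : ℝ => phat (-1/θ0, s) * (if (0:Fin 3) = k then 1 else 0))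
        (pPsi phat (-1/θ0) ψ0 * (if (0:Fin 3) = k then 1 else 0)) ψ0 := by
      rw [pPsi_eq phat hd]
      exact (curveD phat hd (fun _ => -1/θ0) id 0 1 ψ0
        (hasDerivAt_const _ _) (hasDerivAt_id _)).mul_const _
    exact h1.deriv
  -- 2: θ–u
  · intro k
    have hX : ∀ s t : ℝ, X1 phat τ0 τ1 τ2 ψ0 (Pi.single k t) s 0 0 0
        = phat (-1/s, ψ0 + 0 * t + ((1/2) * (-1/s)) * t ^ 2)
            * (0 + (if (0:Fin 3) = k then 1 else 0) * t) + 0 * t := by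
      intro s t
      simp only [X1, psiVal, Pi.add_apply, single0, sumsq_single, sumsq_pair, sumsq_std, sum_std, Matrix.zero_apply, Pi.zero_apply, mul_zero, zero_mul, add_zero, zero_add, Finset.sum_const_zero, zsq]
      try ring_nf
    have hF : (fun s : ℝ => deriv (fun t : ℝ => X1 phat τ0 τ1 τ2 ψ0 (Pi.single k t) s 0 0 0) 0)
        = fun s => phat (-1/s, ψ0) * (if (0:Fin 3) = k then 1 else 0) := by
      funext s
      simp only [hX]
      rw [lemI phat hd]
      ring
    rw [hF]
    have h2 : HasDerivAt (fun s : ℝ => phat (-1/s, ψ0) * (if (0:Fin 3) = k then 1 else 0))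
        ((fderiv ℝ phat (-1/θ0, ψ0)) (1/θ0^2, 0) * (if (0:Fin 3) = k then 1 else 0)) θ0 :=
      (curveD phat hd (fun s : ℝ => -1/s) (fun _ => ψ0) (1/θ0^2) 0 θ0
        (lemInv θ0 hθ0) (hasDerivAt_const _ _)).mul_const _
    rw [h2.deriv, show ((1/θ0^2 : ℝ), (0:ℝ)) = (1/θ0^2) • ((1:ℝ), (0:ℝ)) by simp,
      map_smul, smul_eq_mul, ← pTheta_eq phat hd]
    ring
  -- 3: u–Σ
  · intro m k l
    have hX : ∀ s t : ℝ, X1 phat τ0 τ1 τ2 ψ0 (Pi.single m s) θ0 (Matrix.single k l t) 0 0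
        = phat (-1/θ0, (ψ0 + ((1/2) * (-1/θ0)) * s ^ 2) + 0 * t + ((1/2) * τ1) * t ^ 2)
            * ((if (0:Fin 3) = m then 1 else 0) * s + 0 * t)
          + ((-1/θ0) * (if k = 0 then 1 else 0) * (if l = m then 1 else 0) * s) * t := by
      intro s t
      simp only [X1, psiVal, Pi.add_apply, single0, sumsq_single, sumsq_pair, sumsq_std, sum_std, Matrix.zero_apply, Pi.zero_apply, mul_zero, zero_mul, add_zero, zero_add, Finset.sum_const_zero, zsq]
      try ring_nf
    have hF : (fun s : ℝ => deriv (fun t : ℝ => X1 phat τ0 τ1 τ2 ψ0 (Pi.single m s) θ0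
          (Matrix.single k l t) 0 0) 0)
        = fun s => ((-1/θ0) * (if k = 0 then 1 else 0) * (if l = m then 1 else 0)) * s := by
      funext s
      simp only [hX]
      rw [lemI phat hd]
      ring
    rw [hF]
    have h1 : HasDerivAt (fun s : ℝ =>
        ((-1/θ0) * (if k = 0 then 1 else 0) * (if l = m then 1 else 0)) * s)
        (((-1/θ0) * (if k = 0 then 1 else 0) * (if l = m then 1 else 0)) * 1) 0 :=
      (hasDerivAt_id (0:ℝ)).const_mul _
    rw [h1.deriv]
    ring
  -- 4: σ–u
  · intro k
    have hX : ∀ s t : ℝ, X1 phat τ0 τ1 τ2 ψ0 (Pi.single k t) θ0 0 s 0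
        = phat (-1/θ0, (ψ0 + ((1/2) * τ2) * s ^ 2) + 0 * t + ((1/2) * (-1/θ0)) * t ^ 2)
            * (0 + (if (0:Fin 3) = k then 1 else 0) * t)
          + ((-1/θ0) * (if (0:Fin 3) = k then 1 else 0) * s) * t := by
      intro s t
      simp only [X1, psiVal, Pi.add_apply, single0, sumsq_single, sumsq_pair, sumsq_std, sum_std, Matrix.zero_apply, Pi.zero_apply, mul_zero, zero_mul, add_zero, zero_add, Finset.sum_const_zero, zsq]
      try ring_nf
    have hF : (fun s : ℝ => deriv (fun t : ℝ => X1 phat τ0 τ1 τ2 ψ0 (Pi.single k t) θ0 0 s 0) 0)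
        = fun s => phat (-1/θ0, ψ0 + ((1/2) * τ2) * s ^ 2) * (if (0:Fin 3) = k then 1 else 0)
            + ((-1/θ0) * (if (0:Fin 3) = k then 1 else 0)) * s := by
      funext s
      simp only [hX]
      rw [lemI phat hd]
      ring
    rw [hF]
    have h1 : HasDerivAt (fun s : ℝ =>
        phat (-1/θ0, ψ0 + ((1/2) * τ2) * s ^ 2) * (if (0:Fin 3) = k then 1 else 0)
          + ((-1/θ0) * (if (0:Fin 3) = k then 1 else 0)) * s)
        (0 * (if (0:Fin 3) = k then 1 else 0)
          + ((-1/θ0) * (if (0:Fin 3) = k then 1 else 0)) * 1) 0 :=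
      ((lemD' phat hd (-1/θ0) ψ0 ((1/2) * τ2)).mul_const _).add
        ((hasDerivAt_id (0:ℝ)).const_mul _)
    rw [h1.deriv]
    ring
  -- 5: θ–q
  · intro k
    have hX : ∀ s t : ℝ, X1 phat τ0 τ1 τ2 ψ0 0 s 0 0 (Pi.single k t)
        = 0 + ((-1/s) * (if (0:Fin 3) = k then 1 else 0)) * t := by
      intro s t
      simp only [X1, psiVal, Pi.add_apply, single0, sumsq_single, sumsq_pair, sumsq_std, sum_std, Matrix.zero_apply, Pi.zero_apply, mul_zero, zero_mul, add_zero, zero_add, Finset.sum_const_zero, zsq]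
      try ring_nf
    have hF : (fun s : ℝ => deriv (fun t : ℝ => X1 phat τ0 τ1 τ2 ψ0 0 s 0 0 (Pi.single k t)) 0)
        = fun s => (-1/s) * (if (0:Fin 3) = k then 1 else 0) := by
      funext s
      simp only [hX]
      rw [lemLin]
    rw [hF]
    have h5 : HasDerivAt (fun s : ℝ => (-1/s) * (if (0:Fin 3) = k then 1 else 0))
        (1/θ0^2 * (if (0:Fin 3) = k then 1 else 0)) θ0 :=
      (lemInv θ0 hθ0).mul_const _
    rw [h5.deriv]
    ring
  -- 6: ψψ
  · have h : (fun s : ℝ => deriv (fun t : ℝ => X1 phat τ0 τ1 τ2 t 0 θ0 0 0 0) s)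
        = fun _ => (0:ℝ) := by
      funext s
      have h0 : (fun t : ℝ => X1 phat τ0 τ1 τ2 t 0 θ0 0 0 0) = fun _ => (0:ℝ) := by
        funext t; simp [X1]
      rw [h0]; exact deriv_const _ _
    rw [h]; exact deriv_const _ _
  -- 7: ψθ
  · have h : (fun s : ℝ => deriv (fun t : ℝ => X1 phat τ0 τ1 τ2 t 0 s 0 0 0) ψ0)
        = fun _ => (0:ℝ) := by
      funext s
      have h0 : (fun t : ℝ => X1 phat τ0 τ1 τ2 t 0 s 0 0 0) = fun _ => (0:ℝ) := by
        funext t; simp [X1]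
      rw [h0]; exact deriv_const _ _
    rw [h]; exact deriv_const _ _
  -- 8: θθ
  · have h : (fun s : ℝ => deriv (fun t : ℝ => X1 phat τ0 τ1 τ2 ψ0 0 t 0 0 0) s)
        = fun _ => (0:ℝ) := by
      funext s
      have h0 : (fun t : ℝ => X1 phat τ0 τ1 τ2 ψ0 0 t 0 0 0) = fun _ => (0:ℝ) := by
        funext t; simp [X1]
      rw [h0]; exact deriv_const _ _
    rw [h]; exact deriv_const _ _
  -- 9: u–u
  · intro j k
    have hX : ∀ s t : ℝ, X1 phat τ0 τ1 τ2 ψ0 (Pi.single j s + Pi.single k t) θ0 0 0 0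
        = phat (-1/θ0, (ψ0 + ((1/2) * (-1/θ0)) * s ^ 2)
              + ((-1/θ0) * s * (if j = k then 1 else 0)) * t + ((1/2) * (-1/θ0)) * t ^ 2)
            * ((if (0:Fin 3) = j then 1 else 0) * s + (if (0:Fin 3) = k then 1 else 0) * t)
          + 0 * t := by
      intro s t
      simp only [X1, psiVal, Pi.add_apply, single0, sumsq_single, sumsq_pair, sumsq_std, sum_std, Matrix.zero_apply, Pi.zero_apply, mul_zero, zero_mul, add_zero, zero_add, Finset.sum_const_zero, zsq]
      try ring_nf
    have hF : (fun s : ℝ => deriv (fun t : ℝ => X1 phat τ0 τ1 τ2 ψ0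
          (Pi.single j s + Pi.single k t) θ0 0 0 0) 0)
        = fun s => ((-1/θ0) * (if j = k then 1 else 0) * (if (0:Fin 3) = j then 1 else 0))
              * (s ^ 2 * (fderiv ℝ phat (-1/θ0, ψ0 + ((1/2) * (-1/θ0)) * s ^ 2)) (0, 1))
            + phat (-1/θ0, ψ0 + ((1/2) * (-1/θ0)) * s ^ 2)
              * (if (0:Fin 3) = k then 1 else 0) := by
      funext s
      simp only [hX]
      rw [lemI phat hd]
      ring
    rw [hF]
    exact lemO phat hp (-1/θ0) ψ0 ((1/2) * (-1/θ0)) _ _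
  -- 10: Σ–Σ
  · intro j k l m
    have h : (fun s : ℝ => deriv (fun t : ℝ => X1 phat τ0 τ1 τ2 ψ0 0 θ0
          (Matrix.single j k s + Matrix.single l m t) 0 0) 0)
        = fun _ => (0:ℝ) := by
      funext s
      have h0 : (fun t : ℝ => X1 phat τ0 τ1 τ2 ψ0 0 θ0
          (Matrix.single j k s + Matrix.single l m t) 0 0)
          = fun _ => (0:ℝ) := by
        funext t; simp [X1]
      rw [h0]; exact deriv_const _ _
    rw [h]; exact deriv_const _ _
  -- 11: σσ
  · have h : (fun s : ℝ => deriv (fun t : ℝ => X1 phat τ0 τ1 τ2 ψ0 0 θ0 0 t 0) s)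
        = fun _ => (0:ℝ) := by
      funext s
      have h0 : (fun t : ℝ => X1 phat τ0 τ1 τ2 ψ0 0 θ0 0 t 0) = fun _ => (0:ℝ) := by
        funext t; simp [X1]
      rw [h0]; exact deriv_const _ _
    rw [h]; exact deriv_const _ _
  -- 12: q–q
  · intro j k
    have hX : ∀ s t : ℝ, X1 phat τ0 τ1 τ2 ψ0 0 θ0 0 0 (Pi.single j s + Pi.single k t)
        = ((-1/θ0) * ((if (0:Fin 3) = j then 1 else 0) * s))
          + ((-1/θ0) * (if (0:Fin 3) = k then 1 else 0)) * t := by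
      intro s t
      simp only [X1, psiVal, Pi.add_apply, single0, sumsq_single, sumsq_pair, sumsq_std, sum_std, Matrix.zero_apply, Pi.zero_apply, mul_zero, zero_mul, add_zero, zero_add, Finset.sum_const_zero, zsq]
      try ring_nf
    have hF : (fun s : ℝ => deriv (fun t : ℝ => X1 phat τ0 τ1 τ2 ψ0 0 θ0 0 0
          (Pi.single j s + Pi.single k t)) 0)
        = fun _ => (-1/θ0) * (if (0:Fin 3) = k then 1 else 0) := by
      funext s
      simp only [hX]
      rw [lemLin]
    rw [hF]; exact deriv_const _ _
  -- 13: Σ–σ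
  · intro k l
    have h : (fun s : ℝ => deriv (fun t : ℝ => X1 phat τ0 τ1 τ2 ψ0 0 θ0
          (Matrix.single k l s) t 0) 0)
        = fun _ => (0:ℝ) := by
      funext s
      have h0 : (fun t : ℝ => X1 phat τ0 τ1 τ2 ψ0 0 θ0 (Matrix.single k l s) t 0)
          = fun _ => (0:ℝ) := by
        funext t; simp [X1]
      rw [h0]; exact deriv_const _ _
    rw [h]; exact deriv_const _ _
  -- 14: Σ–q
  · intro k l m
    have hX : ∀ s t : ℝ, X1 phat τ0 τ1 τ2 ψ0 0 θ0 (Matrix.single k l s) 0 (Pi.single m t)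
        = 0 + ((-1/θ0) * (if (0:Fin 3) = m then 1 else 0)) * t := by
      intro s t
      simp only [X1, psiVal, Pi.add_apply, single0, sumsq_single, sumsq_pair, sumsq_std, sum_std, Matrix.zero_apply, Pi.zero_apply, mul_zero, zero_mul, add_zero, zero_add, Finset.sum_const_zero, zsq]
      try ring_nf
    have hF : (fun s : ℝ => deriv (fun t : ℝ => X1 phat τ0 τ1 τ2 ψ0 0 θ0
          (Matrix.single k l s) 0 (Pi.single m t)) 0)
        = fun _ => (-1/θ0) * (if (0:Fin 3) = m then 1 else 0) := by
      funext s
      simp only [hX]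
      rw [lemLin]
    rw [hF]; exact deriv_const _ _
  -- 15: σ–q
  · intro k
    have hX : ∀ s t : ℝ, X1 phat τ0 τ1 τ2 ψ0 0 θ0 0 s (Pi.single k t)
        = 0 + ((-1/θ0) * (if (0:Fin 3) = k then 1 else 0)) * t := by
      intro s t
      simp only [X1, psiVal, Pi.add_apply, single0, sumsq_single, sumsq_pair, sumsq_std, sum_std, Matrix.zero_apply, Pi.zero_apply, mul_zero, zero_mul, add_zero, zero_add, Finset.sum_const_zero, zsq]
      try ring_nf
    have hF : (fun s : ℝ => deriv (fun t : ℝ => X1 phat τ0 τ1 τ2 ψ0 0 θ0 0 s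
          (Pi.single k t)) 0)
        = fun _ => (-1/θ0) * (if (0:Fin 3) = k then 1 else 0) := by
      funext s
      simp only [hX]
      rw [lemLin]
    rw [hF]; exact deriv_const _ _
  -- 16: ψ–Σ
  · intro k l
    have h : (fun s : ℝ => deriv (fun t : ℝ => X1 phat τ0 τ1 τ2 s 0 θ0
          (Matrix.single k l t) 0 0) 0)
        = fun _ => (0:ℝ) := by
      funext s
      have h0 : (fun t : ℝ => X1 phat τ0 τ1 τ2 s 0 θ0 (Matrix.single k l t) 0 0)
          = fun _ => (0:ℝ) := by
        funext t; simp [X1]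
      rw [h0]; exact deriv_const _ _
    rw [h]; exact deriv_const _ _
  -- 17: ψ–σ
  · have h : (fun s : ℝ => deriv (fun t : ℝ => X1 phat τ0 τ1 τ2 s 0 θ0 0 t 0) 0)
        = fun _ => (0:ℝ) := by
      funext s
      have h0 : (fun t : ℝ => X1 phat τ0 τ1 τ2 s 0 θ0 0 t 0) = fun _ => (0:ℝ) := by
        funext t; simp [X1]
      rw [h0]; exact deriv_const _ _
    rw [h]; exact deriv_const _ _
  -- 18: ψ–q
  · intro k
    have hX : ∀ s t : ℝ, X1 phat τ0 τ1 τ2 s 0 θ0 0 0 (Pi.single k t)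
        = 0 + ((-1/θ0) * (if (0:Fin 3) = k then 1 else 0)) * t := by
      intro s t
      simp only [X1, psiVal, Pi.add_apply, single0, sumsq_single, sumsq_pair, sumsq_std, sum_std, Matrix.zero_apply, Pi.zero_apply, mul_zero, zero_mul, add_zero, zero_add, Finset.sum_const_zero, zsq]
      try ring_nf
    have hF : (fun s : ℝ => deriv (fun t : ℝ => X1 phat τ0 τ1 τ2 s 0 θ0 0 0
          (Pi.single k t)) 0)
        = fun _ => (-1/θ0) * (if (0:Fin 3) = k then 1 else 0) := by
      funext s
      simp only [hX]
      rw [lemLin]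
    rw [hF]; exact deriv_const _ _
  -- 19: θ–Σ
  · intro k l
    have h : (fun s : ℝ => deriv (fun t : ℝ => X1 phat τ0 τ1 τ2 ψ0 0 s
          (Matrix.single k l t) 0 0) 0)
        = fun _ => (0:ℝ) := by
      funext s
      have h0 : (fun t : ℝ => X1 phat τ0 τ1 τ2 ψ0 0 s (Matrix.single k l t) 0 0)
          = fun _ => (0:ℝ) := by
        funext t; simp [X1]
      rw [h0]; exact deriv_const _ _
    rw [h]; exact deriv_const _ _
  -- 20: θ–σ
  · have h : (fun s : ℝ => deriv (fun t : ℝ => X1 phat τ0 τ1 τ2 ψ0 0 s 0 t 0) 0)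
        = fun _ => (0:ℝ) := by
      funext s
      have h0 : (fun t : ℝ => X1 phat τ0 τ1 τ2 ψ0 0 s 0 t 0) = fun _ => (0:ℝ) := by
        funext t; simp [X1]
      rw [h0]; exact deriv_const _ _
    rw [h]; exact deriv_const _ _
  -- 21: u–q
  · intro j k
    have hX : ∀ s t : ℝ, X1 phat τ0 τ1 τ2 ψ0 (Pi.single j s) θ0 0 0 (Pi.single k t)
        = phat (-1/θ0, (ψ0 + ((1/2) * (-1/θ0)) * s ^ 2) + 0 * t + ((1/2) * τ0) * t ^ 2)
            * ((if (0:Fin 3) = j then 1 else 0) * s + 0 * t)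
          + ((-1/θ0) * (if (0:Fin 3) = k then 1 else 0)) * t := by
      intro s t
      simp only [X1, psiVal, Pi.add_apply, single0, sumsq_single, sumsq_pair, sumsq_std, sum_std, Matrix.zero_apply, Pi.zero_apply, mul_zero, zero_mul, add_zero, zero_add, Finset.sum_const_zero, zsq]
      try ring_nf
    have hF : (fun s : ℝ => deriv (fun t : ℝ => X1 phat τ0 τ1 τ2 ψ0 (Pi.single j s) θ0 0 0
          (Pi.single k t)) 0)
        = fun _ => (-1/θ0) * (if (0:Fin 3) = k then 1 else 0) := by
      funext s
      simp only [hX]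
      rw [lemI phat hd]
      ring
    rw [hF]; exact deriv_const _ _

end
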